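/- arXiv:2010.03417 — 5 statements merged into one kernel-verified Lean document; each statement's English description precedes it below -/
import Mathlib

section
/- For 1 ≤ j ≤ n, the number of fully commutative elements of W(A_n) whose normal form ends with the generator σ_j (i.e., with j_p = j) equals (j/(n+1)) * binomial(2n-j+1, n), an entry of the Catalan triangle. -/
open Polynomial Finset

open Fin.NatCast in
/-- The `i`-th Coxeter generator of `W(A_n)`, viewed as the adjacent transposition
`(i-1, i)` of `Fin (n+1)` (generators are indexed `1 ≤ i ≤ n`). -/
def sig (n i : ℕ) : Equiv.Perm (Fin (n+1)) :=
  Equiv.swap ((i-1 : ℕ) : Fin (n+1)) ((i : ℕ) : Fin (n+1))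

/-- A word in the generators `σ_1, ..., σ_n`. -/
def IsWord (n : ℕ) (w : List ℕ) : Prop := ∀ i ∈ w, 1 ≤ i ∧ i ≤ n

/-- The product of a word of generators. -/
def wprod (n : ℕ) (w : List ℕ) : Equiv.Perm (Fin (n+1)) := (w.map (sig n)).prod

/-- The Coxeter length of an element of `W(A_n)`. -/
noncomputable def len (n : ℕ) (g : Equiv.Perm (Fin (n+1))) : ℕ :=
  sInf {k | ∃ w : List ℕ, IsWord n w ∧ wprod n w = g ∧ w.length = k}

/-- A reduced word. -/
def Reduced (n : ℕ) (w : List ℕ) : Prop :=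
  IsWord n w ∧ w.length = len n (wprod n w)

/-- One commutation move `... i j ... ↦ ... j i ...` with `|i - j| ≥ 2`. -/
inductive CommMove : List ℕ → List ℕ → Prop
  | swap (a b : List ℕ) (i j : ℕ) (h : i + 2 ≤ j ∨ j + 2 ≤ i) :
      CommMove (a ++ i :: j :: b) (a ++ j :: i :: b)

/-- `g ∈ W(A_n)` is fully commutative if any two reduced words for `g` are related
by a sequence of commutation moves. -/
def FC (n : ℕ) (g : Equiv.Perm (Fin (n+1))) : Prop :=
  ∀ w w' : List ℕ, Reduced n w → Reduced n w' → wprod n w = g → wprod n w' = g →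
    Relation.ReflTransGen CommMove w w'

/-- The data `(i_1,j_1), ..., (i_p,j_p)` of a Stembridge normal form:
`n ≥ j_1 > ⋯ > j_p ≥ 1`, `n ≥ i_1 > ⋯ > i_p ≥ 1`, `i_t ≤ j_t`, `0 ≤ p ≤ n`. -/
def NFData (n : ℕ) (L : List (ℕ × ℕ)) : Prop :=
  L.length ≤ n ∧ L.Chain' (fun a b => b.1 < a.1 ∧ b.2 < a.2) ∧
    ∀ p ∈ L, 1 ≤ p.1 ∧ p.1 ≤ p.2 ∧ p.2 ≤ n

/-- The word `⌈i_1,j_1⌉⌈i_2,j_2⌉⋯⌈i_p,j_p⌉` where `⌈i,j⌉ = σ_i σ_{i+1} ⋯ σ_j`. -/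
def nfWord (L : List (ℕ × ℕ)) : List ℕ :=
  (L.map (fun p => List.Ico p.1 (p.2 + 1))).flatten

/-- `A_n^j`: fully commutative elements whose normal form ends with `σ_j`, i.e. `j_p = j`. -/
def Anj (n j : ℕ) : Set (Equiv.Perm (Fin (n+1))) :=
  {g | ∃ L : List (ℕ × ℕ), NFData n L ∧ wprod n (nfWord L) = g ∧
       ∃ h : L ≠ [], (L.getLast h).2 = j}

/-- `a_n^j(q) = ∑_{w ∈ A_n^j} q^{l(w)}`. -/
noncomputable def anj (n j : ℕ) : Polynomial ℤ :=
  ∑ g ∈ (Set.toFinite (Anj n j)).toFinset, X ^ len n g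

/-- The Poincaré polynomial `a_n(q) = ∑_{w ∈ W^c(A_n)} q^{l(w)}`. -/
noncomputable def apoly (n : ℕ) : Polynomial ℤ :=
  ∑ g ∈ (Set.toFinite {g : Equiv.Perm (Fin (n+1)) | FC n g}).toFinset, X ^ len n g

/-- The defining conditions for the family `B_j^k`, `1 ≤ k ≤ j`. -/
def Bfam (B : ℕ → ℕ → Polynomial ℤ) : Prop :=
  (∀ j, 1 ≤ j → B j 1 = 1) ∧
  (∀ j, 2 ≤ j → B j j = ∏ t ∈ Finset.Icc 2 j, (1 - X ^ t)) ∧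
  (∀ j k, 2 ≤ k → k ≤ j - 1 →
    B j k = B (j-1) k + (1 - X ^ j) * B (j-1) (k-1) - B (j-2) (k-1))

/-- The defining conditions for the family `b_j^k = B_j^{j-k+1}`, `1 ≤ k ≤ j`. -/
def bfam (b : ℕ → ℕ → Polynomial ℤ) : Prop :=
  (∀ j, 1 ≤ j → b j j = 1) ∧
  (∀ j, 2 ≤ j → b j 1 = ∏ t ∈ Finset.Icc 2 j, (1 - X ^ t)) ∧
  (∀ j k, 2 ≤ k → k ≤ j - 1 →
    b j k = b (j-1) (k-1) + (1 - X ^ j) * b (j-1) k - b (j-2) (k-1))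

/-- `ψ(k) = q^2 + ⋯ + q^{k+1}`. -/
noncomputable def psi (k : ℕ) : Polynomial ℤ := ∑ t ∈ Finset.Icc 2 (k+1), X ^ t

/-- `Π(u,v) = ∏_{t=u}^{v} (1 - q^t)` (empty product `1` if `u > v`). -/
noncomputable def PiPoly (u v : ℕ) : Polynomial ℤ := ∏ t ∈ Finset.Icc u v, (1 - X ^ t)

/-- `ΣΠ(a,b)[l_1, …, l_u]`: the sum over all `(i_1, …, i_u)` with `a ≤ i_1`,
`i_t + l_t ≤ i_{t+1}`, `i_u + l_u - 1 ≤ b`, of `Π(a,b)` where for each `t` the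
consecutive factors `(1-q^{i_t})⋯(1-q^{i_t+l_t-1})` are replaced by `-q^{i_t}`. -/
noncomputable def SigmaPi : ℕ → ℕ → List ℕ → Polynomial ℤ
  | a, b, [] => PiPoly a b
  | a, b, l :: ls => ∑ i ∈ Finset.Icc a (b + 1 - (l + ls.sum)),
      PiPoly a (i-1) * (-X ^ i) * SigmaPi (i + l) b ls

/-- The polynomials `b(j,k,t)` of Theorem 3.3. -/
noncomputable def bjkt (j k t : ℕ) : Polynomial ℤ :=
  if t = k then PiPoly (k+2) j
  else ∑ u ∈ Finset.Icc 1 (min (j-k-1) (k-t)),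
    ∑ c ∈ Finset.univ.filter (fun c : Composition (k-t) => c.length = u),
      SigmaPi (t+2) j (c.blocks.map (· + 1))

/-- The product `∏ b_{v_u}^{v_{u+1}}` along a chain `[v_0, v_1, …]`. -/
def chainProd {A : Type*} [CommRing A] (b : ℕ → ℕ → A) : List ℕ → A
  | [] => 1
  | [_] => 1
  | x :: y :: rest => b x y * chainProd b (y :: rest)

/-- The sum over all strictly decreasing chains `n = v_0 > v_1 > ⋯ > v_s > v_{s+1} = i`
of `∏_{u=0}^{s} b_{v_u}^{v_{u+1}}`; the `s` interior vertices are encoded as an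
`s`-element subset of `Ioo i n`, listed in decreasing order. -/
noncomputable def chainSum {A : Type*} [CommRing A] (b : ℕ → ℕ → A) (n i s : ℕ) : A :=
  ∑ T ∈ Finset.powersetCard s (Finset.Ioo i n),
    chainProd b (n :: ((T.sort (· ≤ ·)).reverse ++ [i]))

open Fin.NatCast

/-- Integer-index binomial coefficient. -/
noncomputable def Ch (m : ℕ) (k : ℤ) : ℤ :=
  if 0 ≤ k ∧ k ≤ m then ((m.choose k.toNat : ℕ) : ℤ) else 0

lemma Ch_neg (m : ℕ) (k : ℤ) (h : k < 0) : Ch m k = 0 := by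
  simp [Ch]; intro h'; omega

lemma Ch_gt (m : ℕ) (k : ℤ) (h : (m : ℤ) < k) : Ch m k = 0 := by
  simp [Ch]; intro h'; omega

lemma Ch_nat (m k : ℕ) (h : k ≤ m) : Ch m k = (m.choose k : ℤ) := by
  simp [Ch]; intro h'; omega

lemma Ch_zero (m : ℕ) : Ch m 0 = 1 := by simpa using Ch_nat m 0 (by omega)

lemma Ch_pascal (m : ℕ) (k : ℤ) : Ch (m+1) k = Ch m k + Ch m (k-1) := by
  rcases lt_or_ge k 0 with h | h
  · rw [Ch_neg _ _ h, Ch_neg _ _ h, Ch_neg _ _ (by omega)]; ring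
  rcases eq_or_lt_of_le h with h0 | hpos
  · rw [← h0, Ch_zero, Ch_zero, Ch_neg _ _ (by omega)]; ring
  rcases lt_or_ge (m : ℤ) (k - 1) with hbig | hle
  · rw [Ch_gt _ _ (by omega), Ch_gt _ _ (by omega), Ch_gt _ _ (by omega)]; ring
  rcases eq_or_lt_of_le hle with heq | hlt
  · -- k - 1 = m, k = m+1
    have hk : k = (m : ℤ) + 1 := by omega
    rw [hk]; rw [show (m:ℤ)+1-1 = (m:ℤ) by ring]
    rw [Ch_gt m _ (by omega)]
    rw [show ((m:ℤ)+1) = ((m+1 : ℕ) : ℤ) by push_cast; ring]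
    rw [Ch_nat (m+1) (m+1) le_rfl, Ch_nat m m le_rfl]
    simp
  · -- 1 ≤ k ≤ m
    obtain ⟨a, rfl⟩ : ∃ a : ℕ, k = (a : ℤ) + 1 := ⟨(k-1).toNat, by omega⟩
    rw [show ((a:ℤ)+1-1) = (a:ℤ) by ring]
    rw [show ((a:ℤ)+1) = ((a+1:ℕ):ℤ) by push_cast; ring]
    rw [Ch_nat (m+1) (a+1) (by omega), Ch_nat m (a+1) (by omega), Ch_nat m a (by omega)]
    rw [Nat.choose_succ_succ]
    push_cast; ring

lemma Ch_symm (m : ℕ) (k : ℤ) : Ch m k = Ch m (m - k) := by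
  rcases lt_or_ge k 0 with h | h
  · rw [Ch_neg _ _ h, Ch_gt _ _ (by omega)]
  rcases lt_or_ge (m:ℤ) k with h2 | h2
  · rw [Ch_gt _ _ h2, Ch_neg _ _ (by omega)]
  obtain ⟨a, rfl⟩ : ∃ a : ℕ, k = (a:ℤ) := ⟨k.toNat, by omega⟩
  have ha : a ≤ m := by exact_mod_cast h2
  rw [Ch_nat m a ha, show ((m:ℤ) - a) = ((m - a : ℕ) : ℤ) by omega, Ch_nat _ _ (by omega)]
  exact_mod_cast (Nat.choose_symm ha).symm

/-- ballot-type number -/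
noncomputable def Pz (a b : ℕ) : ℤ := Ch (a+b+1) a - Ch (a+b+1) ((a:ℤ)-1)

/-- column sums -/
lemma scol (A c : ℕ) :
    ∑ a' ∈ Finset.range (A+1), Pz a' c = Ch (A+c+1) A - Ch (A+c+1) ((A:ℤ)-2) := by
  induction A with
  | zero =>
      rw [Finset.sum_range_one]
      unfold Pz
      push_cast
      rw [Ch_neg _ (-1) (by norm_num), Ch_neg _ (-2) (by norm_num)]
  | succ A ih =>
      rw [Finset.sum_range_succ, ih]
      unfold Pz
      have e1 : A + 1 + c + 1 = (A + c + 1) + 1 := by ring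
      have e2 : A + c + 1 + 1 = (A + c + 1) + 1 := rfl
      have p1 := Ch_pascal (A+c+1) ((A:ℤ)+1)
      have p2 := Ch_pascal (A+c+1) ((A:ℤ))
      have p3 := Ch_pascal (A+c+1) ((A:ℤ)-1)
      rw [e1]
      push_cast
      simp only [show (A:ℤ)+1-1 = (A:ℤ) from by ring, show (A:ℤ)+1-2 = (A:ℤ)-1 from by ring,
        show (A:ℤ)-1-1 = (A:ℤ)-2 from by ring] at *
      linear_combination p3 - p2
lemma key1 (A : ℕ) : Pz A (A+1) + Pz A A = Pz (A+1) (A+1) := by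
  unfold Pz
  simp only [show A+(A+1)+1 = (2*A+1)+1 from by ring, show A+A+1 = 2*A+1 from by ring,
    show (A+1)+(A+1)+1 = ((2*A+1)+1)+1 from by ring]
  push_cast
  have p1 := Ch_pascal ((2*A+1)+1) ((A:ℤ)+1)
  have p2 := Ch_pascal ((2*A+1)+1) ((A:ℤ))
  have p3 := Ch_pascal (2*A+1) ((A:ℤ)+1)
  have p4 := Ch_pascal (2*A+1) ((A:ℤ))
  have hs : Ch (2*A+1) ((A:ℤ)+1) = Ch (2*A+1) ((A:ℤ)) := by
    rw [Ch_symm (2*A+1) ((A:ℤ)+1)]; norm_num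
    congr 1; push_cast; ring
  simp only [show (A:ℤ)+1-1 = (A:ℤ) from by ring] at *
  linear_combination -p1 + p2 - p3 + p4 - hs

lemma key2 (a B : ℕ) : Pz a (B+1) = Pz a B + (Ch (a+B) ((a:ℤ)-1) - Ch (a+B) ((a:ℤ)-3)) := by
  unfold Pz
  simp only [show a+(B+1)+1 = ((a+B)+1)+1 from by ring, show a+B+1 = (a+B)+1 from rfl]
  have p1 := Ch_pascal ((a+B)+1) ((a:ℤ))
  have p2 := Ch_pascal ((a+B)+1) ((a:ℤ)-1)
  have p3 := Ch_pascal (a+B) ((a:ℤ)-1)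
  have p4 := Ch_pascal (a+B) ((a:ℤ)-2)
  simp only [show (a:ℤ)-1-1 = (a:ℤ)-2 from by ring, show (a:ℤ)-2-1 = (a:ℤ)-3 from by ring] at *
  linear_combination p1 - p2 - p4 + p3

lemma GmainAux : ∀ N a b : ℕ, a + b ≤ N → a ≤ b →
    1 + ∑ a' ∈ Finset.range a, ∑ b' ∈ Finset.Icc a' (b-1), Pz a' b' = Pz a b := by
  intro N
  induction N with
  | zero =>
      intro a b hN hab
      obtain rfl : a = 0 := by omega
      obtain rfl : b = 0 := by omega
      simp [Pz, Ch]
  | succ N ih =>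
      intro a b hN hab
      match a, hab with
      | 0, _ =>
          have hP : Pz 0 b = 1 := by
            unfold Pz
            push_cast
            rw [Ch_zero, Ch_neg _ (-1) (by norm_num)]
            ring
          simp only [Finset.range_zero, Finset.sum_empty, add_zero, hP]
      | A+1, hab =>
          rcases eq_or_lt_of_le hab with rfl | hlt
          · -- b = A+1
            rw [Finset.sum_range_succ]
            have hG := ih A (A+1) (by omega) (by omega)
            rw [show (A+1-1) = A from rfl] at hG ⊢
            simp only [Finset.Icc_self, Finset.sum_singleton]
            linear_combination hG + key1 A
          · -- b ≥ A+2
            obtain ⟨C, rfl⟩ : ∃ C, b = C + 2 := ⟨b - 2, by omega⟩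
            have hsplit : ∀ a' ∈ Finset.range (A+1),
                ∑ b' ∈ Finset.Icc a' (C+2-1), Pz a' b'
                  = (∑ b' ∈ Finset.Icc a' C, Pz a' b') + Pz a' (C+1) := by
              intro a' ha'
              rw [show (C+2-1) = C+1 from rfl]
              exact Finset.sum_Icc_succ_top (by simp at ha'; omega) _
            rw [Finset.sum_congr rfl hsplit, Finset.sum_add_distrib, ← add_assoc]
            have h1 : 1 + ∑ a' ∈ Finset.range (A+1), ∑ b' ∈ Finset.Icc a' C, Pz a' b'
                = Pz (A+1) (C+1) := by
              have := ih (A+1) (C+1) (by omega) (by omega)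
              rwa [show (C+1-1) = C from rfl] at this
            rw [h1, scol A (C+1), key2 (A+1) (C+1)]
            push_cast
            simp only [show ((A:ℤ)+1-1) = (A:ℤ) from by ring,
              show ((A:ℤ)+1-3) = (A:ℤ)-2 from by ring,
              show A+1+(C+1) = A+(C+1)+1 from by ring]

lemma rowsum (a : ℕ) : ∀ d, ∑ b ∈ Finset.range d, Pz a (a + b)
    = Ch (2*a+d+1) ((a:ℤ)+d) - Ch (2*a+d+1) ((a:ℤ)+d+1) := by
  intro d
  induction d with
  | zero =>
      simp only [Finset.range_zero, Finset.sum_empty, Nat.cast_zero, add_zero]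
      rw [Ch_symm (2*a+1) ((a:ℤ)+1),
        show ((2*a+1:ℕ):ℤ) - ((a:ℤ)+1) = (a:ℤ) from by push_cast; ring, sub_self]
  | succ d ihd =>
      rw [Finset.sum_range_succ, ihd]
      unfold Pz
      have hs1 : Ch (2*a+d+1) ((a:ℤ)) = Ch (2*a+d+1) ((a:ℤ)+d+1) := by
        rw [Ch_symm (2*a+d+1) ((a:ℤ))]; congr 1; push_cast; ring
      have hs2 : Ch (2*a+d+1) ((a:ℤ)-1) = Ch (2*a+d+1) ((a:ℤ)+d+2) := by
        rw [Ch_symm (2*a+d+1) ((a:ℤ)-1)]; congr 1; push_cast; ring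
      have p1 := Ch_pascal (2*a+d+1) ((a:ℤ)+d+1)
      have p2 := Ch_pascal (2*a+d+1) ((a:ℤ)+d+2)
      simp only [show a+(a+d)+1 = 2*a+d+1 from by ring,
        show 2*a+(d+1)+1 = (2*a+d+1)+1 from by ring,
        show ((a:ℤ)+d+1-1) = (a:ℤ)+d from by ring,
        show ((a:ℤ)+d+2-1) = (a:ℤ)+d+1 from by ring] at *
      push_cast
      rw [show ((a:ℤ) + ((d:ℤ) + 1) + 1) = ((a:ℤ) + (d:ℤ) + 2) from by ring,
        show ((a:ℤ) + ((d:ℤ) + 1)) = ((a:ℤ) + (d:ℤ) + 1) from by ring]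
      linear_combination hs1 - hs2 - p1 + p2

lemma Pz_zero (b : ℕ) : Pz 0 b = 1 := by
  unfold Pz
  push_cast
  rw [Ch_zero, Ch_neg _ (-1) (by norm_num)]
  ring

lemma Gmain (a b : ℕ) (h : a ≤ b) :
    1 + ∑ a' ∈ Finset.range a, ∑ b' ∈ Finset.Icc a' (b-1), Pz a' b' = Pz a b :=
  GmainAux (a+b) a b le_rfl h

/-- chain relation -/
def Rrel (n : ℕ) (a b : ℕ × ℕ) : Prop :=
  a.1 < b.1 ∧ a.2 < b.2 ∧ b.1 ≤ b.2 ∧ b.2 ≤ n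

instance (n : ℕ) : IsTrans (ℕ × ℕ) (Rrel n) :=
  ⟨fun _ _ _ h1 h2 => ⟨h1.1.trans h2.1, h1.2.1.trans h2.2.1, h2.2.2⟩⟩

instance (n : ℕ) (a b : ℕ × ℕ) : Decidable (Rrel n a b) := by unfold Rrel; infer_instance

def chFA : ℕ → ℕ → ℕ → ℕ → Finset (List (ℕ × ℕ))
  | 0, _, i, j => {[(i,j)]}
  | (d+1), n, i, j =>
      insert [(i,j)] ((Finset.Icc (j+1) n).biUnion fun j' =>
        (Finset.Icc (i+1) j').biUnion fun i' =>
          (chFA d n i' j').image (List.cons (i,j)))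

def PP (n i j : ℕ) (l : List (ℕ × ℕ)) : Prop :=
  ∃ t, l = (i,j) :: t ∧ List.Chain' (Rrel n) l

lemma mem_chFA : ∀ (d n i j : ℕ), n ≤ j + d → ∀ l, l ∈ chFA d n i j ↔ PP n i j l := by
  intro d
  induction d with
  | zero =>
      intro n i j hd l
      simp only [chFA, Finset.mem_singleton]
      constructor
      · rintro rfl; exact ⟨[], rfl, List.isChain_singleton _⟩
      · rintro ⟨t, rfl, hc⟩
        match t with
        | [] => rfl
        | (i',j') :: t' =>
            exfalso
            have := (List.isChain_cons_cons.mp hc).1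
            have : j < j' ∧ j' ≤ n := ⟨this.2.1, this.2.2.2⟩
            omega
  | succ d ih =>
      intro n i j hd l
      simp only [chFA, Finset.mem_insert, Finset.mem_biUnion, Finset.mem_image, Finset.mem_Icc]
      constructor
      · rintro (rfl | ⟨j', hj', i', hi', t, ht, rfl⟩)
        · exact ⟨[], rfl, List.isChain_singleton _⟩
        · obtain ⟨t', rfl, hc⟩ := (ih n i' j' (by omega) t).mp ht
          exact ⟨(i',j') :: t', rfl, List.isChain_cons_cons.mpr
            ⟨⟨by omega, by omega, by omega, by omega⟩, hc⟩⟩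
      · rintro ⟨t, rfl, hc⟩
        match t with
        | [] => exact Or.inl rfl
        | (i',j') :: t' =>
            right
            have hr := (List.isChain_cons_cons.mp hc).1
            have hc' := (List.isChain_cons_cons.mp hc).2
            obtain ⟨h1, h2, h3, h4⟩ := hr
            exact ⟨j', ⟨by omega, by omega⟩, i', ⟨by omega, by omega⟩,
              (i',j') :: t', (ih n i' j' (by omega) _).mpr ⟨t', rfl, hc'⟩, rfl⟩

lemma chFA_head : ∀ (d n i j : ℕ) (l : List (ℕ × ℕ)), l ∈ chFA d n i j →
    ∃ t, l = (i,j) :: t := by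
  intro d
  induction d with
  | zero => intro n i j l hl; simp only [chFA, Finset.mem_singleton] at hl; exact ⟨[], hl⟩
  | succ d ih =>
      intro n i j l hl
      simp only [chFA, Finset.mem_insert, Finset.mem_biUnion, Finset.mem_image] at hl
      rcases hl with rfl | ⟨j', _, i', _, t, _, rfl⟩
      · exact ⟨[], rfl⟩
      · exact ⟨t, rfl⟩

lemma inner_disj (d n i j j' : ℕ) : ∀ i1 ∈ Finset.Icc (i+1) j', ∀ i2 ∈ Finset.Icc (i+1) j',
    i1 ≠ i2 → Disjoint ((chFA d n i1 j').image (List.cons (i,j)))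
      ((chFA d n i2 j').image (List.cons (i,j))) := by
  intro i1 _ i2 _ hne
  simp only [Finset.disjoint_left, Finset.mem_image]
  rintro l ⟨t1, ht1, rfl⟩ ⟨t2, ht2, ht⟩
  obtain ⟨u1, rfl⟩ := chFA_head d n i1 j' t1 ht1
  obtain ⟨u2, rfl⟩ := chFA_head d n i2 j' t2 ht2
  apply hne
  have := congrArg (fun l => (l[1]?).map Prod.fst) ht
  simpa using this.symm

lemma outer_disj (d n i j : ℕ) : ∀ j1 ∈ Finset.Icc (j+1) n, ∀ j2 ∈ Finset.Icc (j+1) n,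
    j1 ≠ j2 → Disjoint
      ((Finset.Icc (i+1) j1).biUnion fun i' => (chFA d n i' j1).image (List.cons (i,j)))
      ((Finset.Icc (i+1) j2).biUnion fun i' => (chFA d n i' j2).image (List.cons (i,j))) := by
  intro j1 _ j2 _ hne
  simp only [Finset.disjoint_left, Finset.mem_biUnion, Finset.mem_image]
  rintro l ⟨i1, hi1, t1, ht1, rfl⟩ ⟨i2, hi2, t2, ht2, ht⟩
  obtain ⟨u1, rfl⟩ := chFA_head d n i1 j1 t1 ht1
  obtain ⟨u2, rfl⟩ := chFA_head d n i2 j2 t2 ht2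
  apply hne
  have := congrArg (fun l => (l[1]?).map Prod.snd) ht
  simpa using this.symm

lemma card_chFA_succ (d n i j : ℕ) : (chFA (d+1) n i j).card
    = 1 + ∑ j' ∈ Finset.Icc (j+1) n, ∑ i' ∈ Finset.Icc (i+1) j', (chFA d n i' j').card := by
  rw [show chFA (d+1) n i j = insert [(i,j)] ((Finset.Icc (j+1) n).biUnion fun j' =>
      (Finset.Icc (i+1) j').biUnion fun i' =>
        (chFA d n i' j').image (List.cons (i,j))) from rfl]
  rw [Finset.card_insert_of_notMem]
  · rw [Finset.card_biUnion (outer_disj d n i j), add_comm]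
    congr 1
    refine Finset.sum_congr rfl fun j' _ => ?_
    rw [Finset.card_biUnion (inner_disj d n i j j')]
    exact Finset.sum_congr rfl fun i' _ =>
      Finset.card_image_of_injective _ (fun a b h => by injection h)
  · simp only [Finset.mem_biUnion, Finset.mem_image]
    rintro ⟨j', _, i', _, t, ht', ht⟩
    obtain ⟨u, rfl⟩ := chFA_head d n i' j' t ht'
    simp at ht

lemma card_chFA_val : ∀ d n i j : ℕ, n ≤ j + d → i ≤ j →
    ((chFA d n i j).card : ℤ) = Pz (n-j) (n-i) := by
  intro d
  induction d with
  | zero =>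
      intro n i j hd hij
      rw [show chFA 0 n i j = {[(i,j)]} from rfl, Finset.card_singleton,
        show n - j = 0 from by omega, Pz_zero]
      norm_num
  | succ d ih =>
      intro n i j hd hij
      rcases le_or_gt n j with hnj | hnj
      · rw [card_chFA_succ, Finset.Icc_eq_empty (by omega), Finset.sum_empty,
          show n - j = 0 from by omega, Pz_zero]
        norm_num
      · rw [card_chFA_succ]
        push_cast
        have inner : ∀ j' ∈ Finset.Icc (j+1) n,
            ∑ i' ∈ Finset.Icc (i+1) j', ((chFA d n i' j').card : ℤ)
              = ∑ b' ∈ Finset.Icc (n-j') ((n-i)-1), Pz (n-j') b' := by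
          intro j' hj'
          simp only [Finset.mem_Icc] at hj'
          refine Finset.sum_nbij' (fun i' => n - i') (fun b' => n - b') ?_ ?_ ?_ ?_ ?_
          · intro i' hi'; simp only [Finset.mem_Icc] at hi' ⊢; omega
          · intro b' hb'; simp only [Finset.mem_Icc] at hb' ⊢; omega
          · intro i' hi'; simp only [Finset.mem_Icc] at hi'; omega
          · intro b' hb'; simp only [Finset.mem_Icc] at hb'; omega
          · intro i' hi'
            simp only [Finset.mem_Icc] at hi'
            rw [ih n i' j' (by omega) (by omega)]
        rw [Finset.sum_congr rfl inner]
        have outer : ∑ j' ∈ Finset.Icc (j+1) n,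
            ∑ b' ∈ Finset.Icc (n-j') ((n-i)-1), Pz (n-j') b'
              = ∑ a' ∈ Finset.range (n-j), ∑ b' ∈ Finset.Icc a' ((n-i)-1), Pz a' b' := by
          refine Finset.sum_nbij' (fun j' => n - j') (fun a' => n - a') ?_ ?_ ?_ ?_ ?_
          · intro j' hj'; simp only [Finset.mem_Icc] at hj'; simp only [Finset.mem_range]; omega
          · intro a' ha'; simp only [Finset.mem_range] at ha'; simp only [Finset.mem_Icc]; omega
          · intro j' hj'; simp only [Finset.mem_Icc] at hj'; omega
          · intro a' ha'; simp only [Finset.mem_range] at ha'; omega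
          · intro j' hj'; rfl
        rw [outer, Gmain (n-j) (n-i) (by omega)]

lemma total_sum (n j : ℕ) (h2 : j ≤ n) :
    ∑ i ∈ Finset.Icc 1 j, ((chFA n n i j).card : ℤ)
      = Ch (2*n-j+1) n - Ch (2*n-j+1) ((n:ℤ)+1) := by
  have step : ∑ i ∈ Finset.Icc 1 j, ((chFA n n i j).card : ℤ)
      = ∑ b ∈ Finset.range j, Pz (n-j) ((n-j) + b) := by
    refine Finset.sum_nbij' (fun i => j - i) (fun b => j - b) ?_ ?_ ?_ ?_ ?_
    · intro i hi; simp only [Finset.mem_Icc] at hi; simp only [Finset.mem_range]; omega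
    · intro b hb; simp only [Finset.mem_range] at hb; simp only [Finset.mem_Icc]; omega
    · intro i hi; simp only [Finset.mem_Icc] at hi; omega
    · intro b hb; simp only [Finset.mem_range] at hb; omega
    · intro i hi
      simp only [Finset.mem_Icc] at hi
      rw [card_chFA_val n n i j (by omega) (by omega), show (n-j) + (j-i) = n - i from by omega]
  rw [step, rowsum (n-j) j, show 2*(n-j)+j+1 = 2*n-j+1 from by omega,
    show (((n-j:ℕ):ℤ)+(j:ℤ)) = (n:ℤ) from by omega]

lemma wprod_append (n : ℕ) (w1 w2 : List ℕ) :
    wprod n (w1 ++ w2) = wprod n w1 * wprod n w2 := by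
  unfold wprod; rw [List.map_append, List.prod_append]

lemma wprod_cons (n : ℕ) (a : ℕ) (w : List ℕ) :
    wprod n (a :: w) = sig n a * wprod n w := by
  unfold wprod; rw [List.map_cons, List.prod_cons]

lemma sig_apply_val (n i : ℕ) (h1 : 1 ≤ i) (h2 : i ≤ n) (x : Fin (n+1)) :
    ((sig n i x : Fin (n+1)) : ℕ) =
      if (x : ℕ) = i - 1 then i else if (x : ℕ) = i then i - 1 else x := by
  unfold sig
  rw [Equiv.swap_apply_def]
  have hv1 : (((i-1 : ℕ) : Fin (n+1)) : ℕ) = i - 1 := Fin.val_cast_of_lt (by omega)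
  have hv2 : (((i : ℕ) : Fin (n+1)) : ℕ) = i := Fin.val_cast_of_lt (by omega)
  have e1 : (x = ((i-1:ℕ) : Fin (n+1))) ↔ (x:ℕ) = i - 1 := by
    rw [Fin.ext_iff, hv1]
  have e2 : (x = ((i:ℕ) : Fin (n+1))) ↔ (x:ℕ) = i := by
    rw [Fin.ext_iff, hv2]
  simp only [e1, e2]
  split_ifs with a1 a2
  · exact hv2
  · exact hv1
  · rfl

lemma cval (n : ℕ) : ∀ d i, 1 ≤ i → i + d ≤ n → ∀ x : Fin (n+1),
    ((wprod n (List.Ico i (i + d + 1)) x : Fin (n+1)) : ℕ) =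
      if (x : ℕ) = i + d then i - 1
      else if i - 1 ≤ (x : ℕ) ∧ (x : ℕ) < i + d then (x : ℕ) + 1 else (x : ℕ) := by
  intro d
  induction d with
  | zero =>
      intro i hi hn x
      rw [show i + 0 + 1 = i + 1 from rfl, List.Ico.eq_cons (by omega),
        List.Ico.eq_nil_of_le (by omega)]
      rw [wprod_cons]
      have : wprod n [] = 1 := rfl
      rw [this, mul_one, sig_apply_val n i hi (by omega)]
      split_ifs <;> omega
  | succ d ih =>
      intro i hi hn x
      rw [List.Ico.eq_cons (by omega), wprod_cons]
      have heq : List.Ico (i+1) (i + (d+1) + 1) = List.Ico (i+1) ((i+1) + d + 1) := by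
        congr 1; omega
      rw [heq]
      have hy := ih (i+1) (by omega) (by omega) x
      rw [Equiv.Perm.mul_apply, sig_apply_val n i hi (by omega), hy]
      split_ifs <;> omega

def okL (n : ℕ) (L : List (ℕ × ℕ)) : Prop :=
  L.Pairwise (fun a b => b.1 < a.1 ∧ b.2 < a.2) ∧ ∀ p ∈ L, 1 ≤ p.1 ∧ p.1 ≤ p.2 ∧ p.2 ≤ n

lemma nfWord_cons (p : ℕ × ℕ) (L : List (ℕ × ℕ)) :
    nfWord (p :: L) = List.Ico p.1 (p.2 + 1) ++ nfWord L := by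
  unfold nfWord; rw [List.map_cons, List.flatten_cons]

lemma cval' (n i j : ℕ) (h1 : 1 ≤ i) (hij : i ≤ j) (hj : j ≤ n) (x : Fin (n+1)) :
    ((wprod n (List.Ico i (j + 1)) x : Fin (n+1)) : ℕ) =
      if (x : ℕ) = j then i - 1
      else if i - 1 ≤ (x : ℕ) ∧ (x : ℕ) < j then (x : ℕ) + 1 else (x : ℕ) := by
  obtain ⟨d, rfl⟩ : ∃ d, j = i + d := ⟨j - i, by omega⟩
  exact cval n d i h1 (by omega) x

lemma structure_lemma (n : ℕ) : ∀ L : List (ℕ × ℕ), okL n L →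
    (∀ p ∈ L, ((wprod n (nfWord L)) ((p.2 : ℕ) : Fin (n+1)) : Fin (n+1)).val = p.1 - 1) ∧
    (∀ x : Fin (n+1), (x : ℕ) ∉ L.map Prod.snd → (x : ℕ) ≤ ((wprod n (nfWord L)) x : Fin (n+1)).val) ∧
    (∀ x : Fin (n+1), (∀ p ∈ L, p.2 < (x : ℕ)) → (wprod n (nfWord L)) x = x) := by
  intro L
  induction L with
  | nil =>
      intro _
      refine ⟨by simp, ?_, ?_⟩ <;> intro x _ <;> simp [nfWord, wprod]
  | cons q L' ih =>
      intro hok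
      obtain ⟨i, j⟩ := q
      have hpw := hok.1
      have hmem := hok.2
      have hhead : ∀ p ∈ L', p.1 < i ∧ p.2 < j := by
        intro p hp; exact (List.pairwise_cons.mp hpw).1 p hp
      have hij : 1 ≤ i ∧ i ≤ j ∧ j ≤ n := hmem (i,j) List.mem_cons_self
      have hok' : okL n L' := ⟨(List.pairwise_cons.mp hpw).2,
        fun p hp => hmem p (List.mem_cons_of_mem _ hp)⟩
      obtain ⟨h1', h2', h3'⟩ := ih hok'
      set g' := wprod n (nfWord L') with hg'
      have hsplit : ∀ x : Fin (n+1), (wprod n (nfWord ((i,j) :: L'))) x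
          = (wprod n (List.Ico i (j+1))) (g' x) := by
        intro x
        rw [nfWord_cons, wprod_append, Equiv.Perm.mul_apply]
      have hginj : Function.Injective g' := g'.injective
      have hjfix : g' (((j : ℕ)) : Fin (n+1)) = ((j : ℕ) : Fin (n+1)) := by
        apply h3'
        intro p hp
        rw [Fin.val_cast_of_lt (by omega)]
        exact (hhead p hp).2
      have hjval : (((j : ℕ) : Fin (n+1)) : ℕ) = j := Fin.val_cast_of_lt (by omega)
      refine ⟨?_, ?_, ?_⟩
      · rintro p hp
        rcases List.mem_cons.mp hp with rfl | hp'
        · rw [hsplit, hjfix, cval' n i j hij.1 hij.2.1 hij.2.2 _, hjval, if_pos rfl]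
        · have hv := h1' p hp'
          have hcond := hmem p (List.mem_cons_of_mem _ hp')
          have hhd := hhead p hp'
          rw [hsplit, cval' n i j hij.1 hij.2.1 hij.2.2 _, hv]
          have : ¬(p.1 - 1 = j) := by omega
          rw [if_neg this, if_neg (by omega)]
      · intro x hx
        have hx1 : (x : ℕ) ≠ j := by
          intro h; apply hx; rw [List.map_cons]; simp only [List.mem_cons]; left; exact h
        have hx2 : (x : ℕ) ∉ L'.map Prod.snd := by
          intro h; apply hx; rw [List.map_cons]; exact List.mem_cons_of_mem _ h
        have hy := h2' x hx2
        rw [hsplit, cval' n i j hij.1 hij.2.1 hij.2.2 _]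
        have hyj : ((g' x : Fin (n+1)) : ℕ) ≠ j := by
          intro h
          have : g' x = ((j : ℕ) : Fin (n+1)) := Fin.ext (by rw [hjval]; exact h)
          have := hginj (this.trans hjfix.symm)
          exact hx1 (by rw [← this] at hjval; exact hjval ▸ rfl)
        rw [if_neg hyj]
        split_ifs <;> omega
      · intro x hxall
        have hgx : g' x = x := h3' x (fun p hp => hxall p (List.mem_cons_of_mem _ hp))
        have hxj : j < (x : ℕ) := hxall (i,j) List.mem_cons_self
        rw [hsplit, hgx]
        apply Fin.ext
        rw [cval' n i j hij.1 hij.2.1 hij.2.2 _, if_neg (by omega), if_neg (by omega)]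

lemma snd_mem_iff (n : ℕ) (L : List (ℕ × ℕ)) (hok : okL n L) (x : ℕ) :
    x ∈ L.map Prod.snd ↔ x ≤ n ∧ ((wprod n (nfWord L)) ((x : ℕ) : Fin (n+1)) : Fin (n+1)).val < x := by
  obtain ⟨h1, h2, _⟩ := structure_lemma n L hok
  constructor
  · intro hx
    obtain ⟨p, hp, rfl⟩ := List.mem_map.mp hx
    have hc := hok.2 p hp
    exact ⟨hc.2.2, by rw [h1 p hp]; omega⟩
  · rintro ⟨hxn, hlt⟩
    by_contra hnm
    have := h2 (((x : ℕ)) : Fin (n+1)) (by rwa [Fin.val_cast_of_lt (by omega)])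
    rw [Fin.val_cast_of_lt (by omega)] at this
    omega

lemma wprod_nfWord_inj (n : ℕ) : ∀ L M : List (ℕ × ℕ), okL n L → okL n M →
    wprod n (nfWord L) = wprod n (nfWord M) → L = M := by
  intro L M hL hM heq
  have hsndpwL : (L.map Prod.snd).Pairwise (· > ·) := hL.1.map _ (fun a b h => h.2)
  have hsndpwM : (M.map Prod.snd).Pairwise (· > ·) := hM.1.map _ (fun a b h => h.2)
  have hsnd : L.map Prod.snd = M.map Prod.snd := by
    have hmem : ∀ x, x ∈ L.map Prod.snd ↔ x ∈ M.map Prod.snd := by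
      intro x
      rw [snd_mem_iff n L hL x, snd_mem_iff n M hM x, heq]
    have hirr : IsIrrefl ℕ (· > ·) := ⟨fun a => by omega⟩
    have hperm : (L.map Prod.snd).Perm (M.map Prod.snd) :=
      List.perm_of_nodup_nodup_toFinset_eq hsndpwL.nodup hsndpwM.nodup
        (Finset.ext (by simpa [List.mem_toFinset] using hmem))
    have : IsAntisymm ℕ (· > ·) := ⟨fun a b h1 h2 => by omega⟩
    exact List.Perm.eq_of_pairwise' hsndpwL hsndpwM hperm
  have hlen : L.length = M.length := by
    have := congrArg List.length hsnd; simpa using this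
  obtain ⟨h1L, _, _⟩ := structure_lemma n L hL
  obtain ⟨h1M, _, _⟩ := structure_lemma n M hM
  apply List.ext_getElem hlen
  intro k hk1 hk2
  have hsndk : L[k].2 = M[k].2 := by
    have := congrArg (fun l => l[k]?) hsnd
    simp only [List.getElem?_map] at this
    rw [List.getElem?_eq_getElem hk1, List.getElem?_eq_getElem hk2] at this
    simpa using this
  have hfstL := h1L L[k] (List.getElem_mem hk1)
  have hfstM := h1M M[k] (List.getElem_mem hk2)
  rw [heq, hsndk] at hfstL
  rw [hfstM] at hfstL
  have hcL := hL.2 L[k] (List.getElem_mem hk1)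
  have hcM := hM.2 M[k] (List.getElem_mem hk2)
  have : L[k].1 = M[k].1 := by omega
  exact Prod.ext this hsndk

lemma list_len_le (n : ℕ) (li : List ℕ) (hnd : li.Nodup) (hm : ∀ x ∈ li, 1 ≤ x ∧ x ≤ n) :
    li.length ≤ n := by
  classical
  have h1 : li.length = li.toFinset.card := (List.toFinset_card_of_nodup hnd).symm
  have h2 : li.toFinset ⊆ Finset.Icc 1 n := by
    intro x hx
    rw [List.mem_toFinset] at hx
    rw [Finset.mem_Icc]
    exact hm x hx
  have h3 := Finset.card_le_card h2
  rw [Nat.card_Icc] at h3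
  omega

def TFin (n j : ℕ) : Finset (List (ℕ × ℕ)) :=
  (Finset.Icc 1 j).biUnion fun i => (chFA n n i j).image List.reverse

lemma NFData_okL {n : ℕ} {L : List (ℕ × ℕ)} (h : NFData n L) : okL n L := by
  refine ⟨?_, h.2.2⟩
  letI : IsTrans (ℕ×ℕ) (fun a b : ℕ×ℕ => b.1 < a.1 ∧ b.2 < a.2) :=
    ⟨fun a b c h1 h2 => ⟨h2.1.trans h1.1, h2.2.trans h1.2⟩⟩
  exact List.isChain_iff_pairwise.mp h.2.1

lemma mem_TFin (n j : ℕ) (h1 : 1 ≤ j) (h2 : j ≤ n) (L : List (ℕ × ℕ)) :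
    L ∈ TFin n j ↔ (NFData n L ∧ ∃ h : L ≠ [], (L.getLast h).2 = j) := by
  letI : IsTrans (ℕ×ℕ) (fun a b : ℕ×ℕ => b.1 < a.1 ∧ b.2 < a.2) :=
    ⟨fun a b c h1 h2 => ⟨h2.1.trans h1.1, h2.2.trans h1.2⟩⟩
  letI : IsIrrefl ℕ (· < ·) := ⟨fun a => by omega⟩
  unfold TFin
  simp only [Finset.mem_biUnion, Finset.mem_image, Finset.mem_Icc]
  constructor
  · rintro ⟨i, ⟨hi1, hi2⟩, l, hl, rfl⟩
    obtain ⟨t, rfl, hch⟩ := (mem_chFA n n i j (by omega) l).mp hl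
    have hpw : List.Pairwise (Rrel n) ((i,j) :: t) := List.isChain_iff_pairwise.mp hch
    have hhd : ∀ p ∈ t, Rrel n (i,j) p := (List.pairwise_cons.mp hpw).1
    have hmem : ∀ p ∈ (i,j) :: t, 1 ≤ p.1 ∧ p.1 ≤ p.2 ∧ p.2 ≤ n := by
      intro p hp
      rcases List.mem_cons.mp hp with rfl | hp'
      · exact ⟨hi1, by omega, by omega⟩
      · have := hhd p hp'
        unfold Rrel at this
        exact ⟨by omega, this.2.2.1, this.2.2.2⟩
    refine ⟨⟨?_, ?_, ?_⟩, ?_⟩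
    · rw [List.length_reverse]
      have hnd : (((i,j)::t).map Prod.snd).Nodup := by
        have hp2 : (((i,j)::t).map Prod.snd).Pairwise (· < ·) :=
          hpw.map _ (fun a b h => h.2.1)
        exact hp2.nodup
      have := list_len_le n _ hnd (by
        intro x hx
        obtain ⟨p, hp, rfl⟩ := List.mem_map.mp hx
        have := hmem p hp
        omega)
      simpa using this
    · refine List.isChain_reverse.mpr ?_
      exact List.IsChain.imp (fun a b hab => ⟨hab.1, hab.2.1⟩) hch
    · intro p hp
      exact hmem p (List.mem_reverse.mp hp)
    · refine ⟨by simp, ?_⟩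
      simp [List.getLast_reverse]
  · rintro ⟨hNF, hne, hlast⟩
    set q := L.getLast hne with hqdef
    have hqmem : q ∈ L := List.getLast_mem hne
    have hq : 1 ≤ q.1 ∧ q.1 ≤ q.2 ∧ q.2 ≤ n := hNF.2.2 q hqmem
    refine ⟨q.1, ⟨hq.1, by rw [← hlast]; exact hq.2.1⟩, L.reverse, ?_, List.reverse_reverse L⟩
    rw [mem_chFA n n q.1 j (by omega)]
    refine ⟨L.dropLast.reverse, ?_, ?_⟩
    · have hqj : q = (q.1, j) := by
        rw [← hlast]
      conv_lhs => rw [← List.dropLast_append_getLast hne]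
      rw [List.reverse_append, ← hqdef, hqj]
      simp
    · refine List.isChain_reverse.mpr ?_
      have hpw : List.Pairwise (fun a b : ℕ×ℕ => b.1 < a.1 ∧ b.2 < a.2) L :=
        List.isChain_iff_pairwise.mp hNF.2.1
      have hpw2 : List.Pairwise (flip (Rrel n)) L := by
        refine hpw.imp_of_mem ?_
        intro a b ha hb hab
        have hca := hNF.2.2 a ha
        exact ⟨hab.1, hab.2, hca.2.1, hca.2.2⟩
      exact hpw2.isChain

lemma card_TFin (n j : ℕ) : (TFin n j).card = ∑ i ∈ Finset.Icc 1 j, (chFA n n i j).card := by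
  unfold TFin
  rw [Finset.card_biUnion]
  · exact Finset.sum_congr rfl fun i _ =>
      Finset.card_image_of_injective _ List.reverse_injective
  · intro i1 _ i2 _ hne
    simp only [Finset.disjoint_left, Finset.mem_image]
    rintro L ⟨l1, hl1, rfl⟩ ⟨l2, hl2, hE⟩
    obtain ⟨t1, rfl⟩ := chFA_head n n i1 j l1 hl1
    obtain ⟨t2, rfl⟩ := chFA_head n n i2 j l2 hl2
    have hl12 : (i2,j) :: t2 = (i1,j) :: t1 := List.reverse_injective hE
    apply hne
    injection hl12 with ha _
    injection ha with ha2 _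
    exact ha2.symm


theorem stmt3 (n j : ℕ) (h1 : 1 ≤ j) (h2 : j ≤ n) :
    Nat.card (Anj n j) = j * Nat.choose (2*n - j + 1) n / (n+1) := by
  classical
  have hset : Anj n j = (fun L => wprod n (nfWord L)) ''
      {L | NFData n L ∧ ∃ h : L ≠ [], (L.getLast h).2 = j} := by
    ext g
    simp only [Anj, Set.mem_image, Set.mem_setOf_eq]
    constructor
    · rintro ⟨L, hNF, hw, hl⟩; exact ⟨L, ⟨hNF, hl⟩, hw⟩
    · rintro ⟨L, ⟨hNF, hl⟩, hw⟩; exact ⟨L, hNF, hw, hl⟩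
  have hSeq : {L | NFData n L ∧ ∃ h : L ≠ [], (L.getLast h).2 = j} = ↑(TFin n j) := by
    ext L
    rw [Finset.mem_coe, mem_TFin n j h1 h2]
    rfl
  have hinj : Set.InjOn (fun L => wprod n (nfWord L))
      {L | NFData n L ∧ ∃ h : L ≠ [], (L.getLast h).2 = j} := by
    intro L hL M hM h
    exact wprod_nfWord_inj n L M (NFData_okL hL.1) (NFData_okL hM.1) h
  have hcard : Nat.card (Anj n j) = (TFin n j).card := by
    rw [Nat.card_coe_set_eq, hset, Set.ncard_image_of_injOn hinj, hSeq,
      Set.ncard_coe_finset]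
  set C1 := (2*n - j + 1).choose n with hC1
  set C2 := (2*n - j + 1).choose (n+1) with hC2
  have hZ : (((TFin n j).card : ℕ) : ℤ) = (C1 : ℤ) - (C2 : ℤ) := by
    rw [card_TFin, Nat.cast_sum, total_sum n j h2,
      Ch_nat (2*n-j+1) n (by omega),
      show ((n:ℤ)+1) = ((n+1 : ℕ) : ℤ) from by push_cast; ring,
      Ch_nat (2*n-j+1) (n+1) (by omega)]
  have hrec : C2 * (n+1) = C1 * (n+1-j) := by
    have h := Nat.choose_succ_right_eq (2*n-j+1) n
    rw [show 2*n-j+1-n = n+1-j from by omega] at h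
    exact h
  have hle : C2 ≤ C1 := by
    by_contra hlt
    push_neg at hlt
    have h3 : C1 * (n+1-j) ≤ C1 * (n+1) := Nat.mul_le_mul_left _ (by omega)
    have h4 : C1 * (n+1) < C2 * (n+1) := (Nat.mul_lt_mul_right (by omega)).mpr hlt
    omega
  have hcard2 : Nat.card (Anj n j) = C1 - C2 := by
    rw [hcard]; omega
  rw [hcard2]
  symm
  apply Nat.div_eq_of_eq_mul_left (by omega)
  rw [Nat.sub_mul, hrec, ← Nat.mul_sub, show (n+1) - (n+1-j) = j from by omega,
    Nat.mul_comm]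
end

section
/- For n ≥ 1, the Catalan numbers satisfy the identity C_n = n − Σ_{k=2}^{n} (−1)^{k-1} binomial(n−k, k−1) C_{n-k+1}. -/
open Polynomial Finset

noncomputable def Yp : Polynomial ℤ := X * (1 - X)

noncomputable def Sp (n : ℕ) : Polynomial ℤ :=
  ∑ m ∈ Finset.range (n+1), Polynomial.C (catalan m : ℤ) * Yp ^ m

noncomputable def Dv (n : ℕ) : ℤ := (Sp n).coeff n

lemma X_pow_dvd_Yp_pow {k m : ℕ} (h : k ≤ m) : (X : Polynomial ℤ)^k ∣ Yp ^ m :=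
  dvd_trans (pow_dvd_pow _ h) (pow_dvd_pow_of_dvd ⟨1 - X, rfl⟩ m)

lemma coeff_Yp_pow {k m : ℕ} (h : k < m) : (Yp ^ m).coeff k = 0 :=
  X_pow_dvd_iff.mp (X_pow_dvd_Yp_pow (le_refl m)) k h

lemma coeff_Sp {a n : ℕ} (h : a ≤ n) : (Sp n).coeff a = Dv a := by
  unfold Dv Sp
  rw [finset_sum_coeff, finset_sum_coeff]
  symm
  apply Finset.sum_subset (Finset.range_subset_range.mpr (by omega))
  intro m hm hnm
  simp only [Finset.mem_range] at hm hnm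
  rw [coeff_C_mul, coeff_Yp_pow (by omega), mul_zero]

lemma key_dvd (n : ℕ) : (X : Polynomial ℤ)^(n+2) ∣ Sp (n+1) - (1 + Yp * (Sp n)^2) := by
  classical
  have h1 : Sp (n+1) = 1 + Yp * ∑ m ∈ Finset.range (n+1),
      Polynomial.C (catalan (m+1) : ℤ) * Yp ^ m := by
    unfold Sp
    rw [Finset.sum_range_succ', Finset.mul_sum]
    simp only [pow_zero, mul_one, catalan_zero, Nat.cast_one, map_one]
    rw [add_comm]
    congr 1
    exact Finset.sum_congr rfl fun m _ => by ring
  have h2 : (Sp n)^2 = ∑ p ∈ (Finset.range (n+1) ×ˢ Finset.range (n+1)),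
      Polynomial.C ((catalan p.1 : ℤ) * (catalan p.2 : ℤ)) * Yp ^ (p.1 + p.2) := by
    rw [sq]
    unfold Sp
    rw [Finset.sum_mul_sum, Finset.sum_product]
    refine Finset.sum_congr rfl fun a _ => Finset.sum_congr rfl fun b _ => ?_
    rw [pow_add, map_mul]
    ring
  set U := Finset.range (n+1) ×ˢ Finset.range (n+1) with hU
  set F : ℕ × ℕ → Polynomial ℤ :=
    fun p => Polynomial.C ((catalan p.1 : ℤ) * (catalan p.2 : ℤ)) * Yp ^ (p.1 + p.2) with hF
  have hsplit := Finset.sum_filter_add_sum_filter_not U (fun p => p.1 + p.2 ≤ n) F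
  have h3 : ∑ p ∈ U.filter (fun p => p.1 + p.2 ≤ n), F p
      = ∑ m ∈ Finset.range (n+1), Polynomial.C (catalan (m+1) : ℤ) * Yp ^ m := by
    rw [← Finset.sum_fiberwise_of_maps_to (g := fun p : ℕ × ℕ => p.1 + p.2)
        (t := Finset.range (n+1)) (fun p hp => by
          simp only [Finset.mem_filter] at hp
          exact Finset.mem_range.mpr (show p.1 + p.2 < n + 1 by omega)) F]
    refine Finset.sum_congr rfl fun m hm => ?_
    have hmn : m ≤ n := by simpa [Nat.lt_succ_iff] using hm
    have hfib : (U.filter (fun p => p.1 + p.2 ≤ n)).filter (fun p => p.1 + p.2 = m)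
        = Finset.HasAntidiagonal.antidiagonal m := by
      ext p
      simp only [Finset.mem_filter, hU, Finset.mem_product, Finset.mem_range,
        Finset.HasAntidiagonal.mem_antidiagonal]
      omega
    rw [hfib, catalan_succ' m]
    push_cast
    rw [map_sum, Finset.sum_mul]
    refine Finset.sum_congr rfl fun p hp => ?_
    rw [Finset.HasAntidiagonal.mem_antidiagonal] at hp
    rw [hF]
    simp only
    rw [hp, map_mul]
  have h4 : Sp (n+1) - (1 + Yp * (Sp n)^2)
      = - Yp * ∑ p ∈ U.filter (fun p => ¬ p.1 + p.2 ≤ n), F p := by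
    rw [h1, h2, ← hsplit, h3]
    ring
  rw [h4]
  have hx : (X : Polynomial ℤ)^(n+2) = X * X^(n+1) := by ring
  rw [hx]
  apply mul_dvd_mul
  · exact ⟨-(1 - X), by rw [Yp]; ring⟩
  · apply Finset.dvd_sum
    intro p hp
    simp only [Finset.mem_filter] at hp
    exact Dvd.dvd.mul_left (X_pow_dvd_Yp_pow (by omega)) _

lemma Dv_eq_one : ∀ n, Dv n = 1 := by
  intro n
  induction n using Nat.strong_induction_on with
  | _ n ih =>
    match n with
    | 0 => simp [Dv, Sp]
    | 1 =>
      have : Sp 1 = 1 + Yp := by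
        simp [Sp, Finset.sum_range_succ]
      simp [Dv, this, Yp, mul_one_sub, coeff_sub, coeff_one]
    | (k+2) =>
      have hk := key_dvd (k+1)
      have hc : (Sp (k+2)).coeff (k+2) = (1 + Yp * (Sp (k+1))^2).coeff (k+2) := by
        have h0 := (X_pow_dvd_iff.mp hk) (k+2) (by omega)
        rw [coeff_sub, sub_eq_zero] at h0
        exact h0
      have hq : ∀ j, j ≤ k+1 → ((Sp (k+1))^2).coeff j = (j+1 : ℤ) := by
        intro j hj
        rw [sq, coeff_mul]
        have hterm : ∀ p ∈ Finset.HasAntidiagonal.antidiagonal j,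
            (Sp (k+1)).coeff p.1 * (Sp (k+1)).coeff p.2 = 1 := by
          intro p hp
          rw [Finset.HasAntidiagonal.mem_antidiagonal] at hp
          rw [coeff_Sp (show p.1 ≤ k+1 by omega), coeff_Sp (show p.2 ≤ k+1 by omega),
            ih p.1 (by omega), ih p.2 (by omega)]
          exact one_mul 1
        rw [Finset.sum_congr rfl hterm, Finset.sum_const, Finset.Nat.card_antidiagonal]
        simp
      have hYp : Yp * (Sp (k+1))^2 = X * ((Sp (k+1))^2) - X^2 * ((Sp (k+1))^2) := by
        rw [Yp]; ring
      show (Sp (k+2)).coeff (k+2) = 1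
      rw [hc, coeff_add, hYp, coeff_sub, coeff_X_mul]
      rw [show ((1:Polynomial ℤ)).coeff (k+2) = 0 by simp [coeff_one]]
      rw [show k+2 = k+2 from rfl]
      rw [Polynomial.coeff_X_pow_mul ((Sp (k+1))^2) 2 k]
      rw [hq (k+1) (le_refl _), hq k (by omega)]
      push_cast; ring

noncomputable def Gp (n : ℕ) : Polynomial ℤ :=
  ∑ m ∈ Finset.Icc 1 n, Polynomial.C (catalan m : ℤ) * X ^ m * (1 - X) ^ (m - 1)

lemma oneSubX_mul_Gp (n : ℕ) : (1 - X) * Gp n = Sp n - 1 := by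
  unfold Gp Sp
  rw [Finset.mul_sum]
  have hr : Finset.range (n+1) = insert 0 (Finset.Icc 1 n) := by
    ext x; simp [Nat.lt_succ_iff]; omega
  rw [hr, Finset.sum_insert (by simp)]
  simp only [pow_zero, mul_one, catalan_zero, Nat.cast_one, map_one]
  rw [add_sub_cancel_left]
  refine Finset.sum_congr rfl fun m hm => ?_
  rw [Finset.mem_Icc] at hm
  obtain ⟨t, rfl⟩ : ∃ t, m = t + 1 := ⟨m - 1, by omega⟩
  simp only [Nat.add_sub_cancel, Yp, mul_pow]
  ring

lemma Gp_coeff_succ (n : ℕ) : (Gp (n+1)).coeff n = (Gp n).coeff n := by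
  unfold Gp
  rw [Finset.sum_Icc_succ_top (by omega), coeff_add]
  simp only [Nat.add_sub_cancel]
  have h0 : (Polynomial.C (catalan (n+1) : ℤ) * X^(n+1) * (1 - X)^n).coeff n = 0 := by
    have hd : (X : Polynomial ℤ)^(n+1) ∣
        Polynomial.C (catalan (n+1) : ℤ) * X^(n+1) * (1 - X)^n :=
      ⟨Polynomial.C (catalan (n+1) : ℤ) * (1 - X)^n, by ring⟩
    exact X_pow_dvd_iff.mp hd n (by omega)
  rw [h0, add_zero]

lemma Gp_coeff_self (n : ℕ) : (Gp n).coeff n = n := by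
  induction n with
  | zero => simp [Gp]
  | succ k ihk =>
    have h := congrArg (fun p : Polynomial ℤ => p.coeff (k+1)) (oneSubX_mul_Gp (k+1))
    rw [sub_mul, one_mul, coeff_sub, coeff_X_mul, coeff_sub,
      coeff_Sp (le_refl (k+1)), Dv_eq_one, Gp_coeff_succ, ihk] at h
    have h1 : ((1:Polynomial ℤ)).coeff (k+1) = 0 := by simp [coeff_one]
    rw [h1] at h
    push_cast
    linarith

lemma coeff_one_sub_X_pow (r : ℕ) : ∀ j : ℕ,
    ((1 - X : Polynomial ℤ)^r).coeff j = (-1)^j * (r.choose j) := by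
  induction r with
  | zero =>
    intro j
    cases j with
    | zero => simp
    | succ j => simp [coeff_one]
  | succ r ih =>
    intro j
    have hp : (1 - X : Polynomial ℤ)^(r+1) = (1-X)^r - X * (1-X)^r := by ring
    rw [hp, coeff_sub]
    cases j with
    | zero => simp [ih 0, mul_coeff_zero]
    | succ j =>
      rw [coeff_X_mul, ih, ih, Nat.choose_succ_succ]
      push_cast
      ring

lemma Gp_coeff_formula (n : ℕ) :
    ((n : ℤ)) = ∑ m ∈ Finset.Icc 1 n,
      (-1:ℤ)^(n-m) * (((m-1).choose (n-m) : ℕ) : ℤ) * (catalan m : ℤ) := by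
  rw [← Gp_coeff_self n]
  unfold Gp
  rw [finset_sum_coeff]
  refine Finset.sum_congr rfl fun m hm => ?_
  rw [Finset.mem_Icc] at hm
  rw [mul_assoc, coeff_C_mul]
  have he : n = (n - m) + m := by omega
  rw [he, Polynomial.coeff_X_pow_mul ((1 - X : Polynomial ℤ)^(m-1)) m (n-m),
    coeff_one_sub_X_pow, Nat.add_sub_cancel]
  ring

lemma key_sum (n : ℕ) :
    ∑ k ∈ Finset.Icc 1 n, (-1:ℤ)^(k-1) * ((n-k).choose (k-1) : ℤ) * (catalan (n-k+1) : ℤ)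
      = n := by
  rw [Gp_coeff_formula n]
  refine Finset.sum_nbij' (fun k => n + 1 - k) (fun m => n + 1 - m) ?_ ?_ ?_ ?_ ?_
  · intro a ha; simp only [Finset.mem_Icc] at ha ⊢; omega
  · intro a ha; simp only [Finset.mem_Icc] at ha ⊢; omega
  · intro a ha; simp only [Finset.mem_Icc] at ha; omega
  · intro a ha; simp only [Finset.mem_Icc] at ha; omega
  · intro a ha
    simp only [Finset.mem_Icc] at ha
    rw [show n - (n + 1 - a) = a - 1 by omega, show (n + 1 - a) - 1 = n - a by omega,
      show n - a + 1 = n + 1 - a by omega]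



theorem stmt11 (n : ℕ) (hn : 1 ≤ n) :
    (catalan n : ℤ) = n - ∑ k ∈ Finset.Icc 2 n,
      (-1)^(k-1) * (Nat.choose (n-k) (k-1) : ℤ) * (catalan (n-k+1) : ℤ) := by
  have key := key_sum n
  have hsplit : Finset.Icc 1 n = insert 1 (Finset.Icc 2 n) := by
    ext x; simp only [Finset.mem_Icc, Finset.mem_insert]; omega
  rw [hsplit, Finset.sum_insert (by simp), show (1:ℕ)-1 = 0 from rfl, pow_zero,
    Nat.choose_zero_right, show n - 1 + 1 = n by omega] at key
  push_cast at key
  linarith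
end

section
/- The polynomials b_j^k := B_j^{j-k+1} satisfy b_j^{j-1} = 1 − q^2 − q^3 − ··· − q^j for all j ≥ 2. -/
open Polynomial Finset

theorem stmt12 (B : ℕ → ℕ → Polynomial ℤ) (hB : Bfam B) (j : ℕ) (hj : 2 ≤ j) :
    B j (j - (j-1) + 1) = 1 - ∑ t ∈ Finset.Icc 2 j, X ^ t := by
  obtain ⟨h1, h2, h3⟩ := hB
  have hk : j - (j-1) + 1 = 2 := by omega
  rw [hk]
  induction j with
  | zero => omega
  | succ m ih =>
    rcases Nat.lt_or_ge m 2 with hm | hm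
    · interval_cases m
      · omega
      · rw [h2 2 le_rfl]
        simp [Finset.Icc_self]
    · have hrec := h3 (m+1) 2 le_rfl (by omega)
      have hb1 : B m 1 = 1 := h1 m (by omega)
      have hb2 : B (m-1) 1 = 1 := h1 (m-1) (by omega)
      simp only [Nat.add_sub_cancel, show m + 1 - 2 = m - 1 from by omega,
        show 2 - 1 = 1 from rfl] at hrec
      rw [hrec, hb1, hb2, ih (by omega) (by omega),
        Finset.sum_Icc_succ_top (by omega : 2 ≤ m + 1)]
      ring
end

section
/- Let ψ(k) = q^2 + ··· + q^{k+1}, let Π(u,v) = Π_{t=u}^{v} (1−q^t) (empty product 1 if u > v), and define ΣΠ(a,b)[l_1,...,l_u] = Σ over all (i_1,...,i_u) with a ≤ i_1, i_t + l_t ≤ i_{t+1}, i_u + l_u − 1 ≤ b, of the product Π(a,b) with, for each t, the consecutive factors (1−q^{i_t})···(1−q^{i_t+l_t−1}) replaced by −q^{i_t} (value 0 if the index set is empty). Then the polynomials b_j^k satisfy, for 1 ≤ k ≤ j−1: b_j^k = Σ_{t=1}^{k} (1 − ψ(t)) b(j,k,t), where b(j,k,k) = Π(k+2, j) and, for 1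 ≤ t < k, b(j,k,t) = Σ_{u=1}^{min(j−k−1, k−t)} Σ_{d_1+···+d_u = k−t, d_i ≥ 1} ΣΠ(t+2, j)[d_1+1,...,d_u+1]. -/
open Polynomial Finset

namespace Stmt13

lemma SigmaPi_nil (a b : ℕ) : SigmaPi a b [] = PiPoly a b := rfl

lemma SigmaPi_cons (a b l : ℕ) (ls : List ℕ) :
    SigmaPi a b (l :: ls) = ∑ i ∈ Finset.Icc a (b + 1 - (l + ls.sum)),
      PiPoly a (i-1) * (-X ^ i) * SigmaPi (i + l) b ls := rfl

lemma PiPoly_empty {a j : ℕ} (h : j < a) : PiPoly a j = 1 := by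
  rw [PiPoly, Finset.Icc_eq_empty (by omega), Finset.prod_empty]

lemma PiPoly_succ {a j : ℕ} (h1 : 1 ≤ a) (h2 : a ≤ j) :
    PiPoly a j = (1 - X ^ j) * PiPoly a (j-1) := by
  unfold PiPoly
  have hj : j = (j - 1) + 1 := by omega
  rw [hj, Finset.prod_Icc_succ_top (by omega)]
  rw [← hj]; ring

lemma Z {a j : ℕ} {ls : List ℕ} (ha : 1 ≤ a) (hne : ls ≠ [])
    (h : j + 1 < a + ls.sum) : SigmaPi a j ls = 0 := by
  match ls with
  | l :: ls' =>
    rw [SigmaPi_cons, Finset.Icc_eq_empty, Finset.sum_empty]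
    simp only [List.sum_cons] at h
    omega

lemma L (ls : List ℕ) : ∀ (hne : ls ≠ []) (a j : ℕ), (∀ x ∈ ls, 1 ≤ x) → 1 ≤ a →
    a + ls.sum ≤ j + 1 →
    SigmaPi a j ls = (1 - X^j) * SigmaPi a (j-1) ls
      + (-X ^ (j + 1 - ls.getLast hne)) * SigmaPi a (j - ls.getLast hne) ls.dropLast := by
  induction ls with
  | nil => intro h; exact absurd rfl h
  | cons l tail ih =>
    intro hne a j hpos ha hsum
    simp only [List.sum_cons] at hsum
    have hl : 1 ≤ l := hpos l (by simp)
    cases tail with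
    | nil =>
      simp only [List.sum_nil, add_zero] at hsum
      have hlj : l ≤ j := by omega
      have hj1 : 1 ≤ j := by omega
      simp only [List.getLast_singleton, List.dropLast_singleton]
      rw [SigmaPi_cons, SigmaPi_cons, SigmaPi_nil]
      simp only [List.sum_nil, add_zero]
      have e1 : j + 1 - l = (j - l) + 1 := by omega
      have e2 : (j - 1) + 1 - l = j - l := by omega
      rw [e1, e2, Finset.sum_Icc_succ_top (by omega)]
      have etop : PiPoly a (j - l + 1 - 1) * (-X ^ (j - l + 1)) * SigmaPi (j - l + 1 + l) j []
          = PiPoly a (j-l) * (-X ^ (j-l+1)) := by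
        rw [SigmaPi_nil, show j - l + 1 - 1 = j - l by omega,
          PiPoly_empty (show j < j - l + 1 + l by omega)]
        ring
      rw [etop, Finset.mul_sum]
      have hterm : ∀ i ∈ Finset.Icc a (j - l),
          PiPoly a (i-1) * (-X^i) * SigmaPi (i+l) j []
          = (1 - X^j) * (PiPoly a (i-1) * (-X^i) * SigmaPi (i+l) (j-1) []) := by
        intro i hi; simp only [Finset.mem_Icc] at hi
        rw [SigmaPi_nil, SigmaPi_nil, PiPoly_succ (show 1 ≤ i + l by omega) (show i + l ≤ j by omega)]; ring
      rw [Finset.sum_congr rfl hterm]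
      ring
    | cons t1 trest =>
      have htne : (t1 :: trest : List ℕ) ≠ [] := by simp
      set tail := t1 :: trest with htail
      have hg1 : 1 ≤ tail.getLast htne := hpos _ (List.mem_cons_of_mem _ (List.getLast_mem htne))
      have hgsum : tail.getLast htne ≤ tail.sum :=
        List.single_le_sum (fun x hx => Nat.zero_le x) _ (List.getLast_mem htne)
      have hts1 : 1 ≤ tail.sum := by
        have := hpos t1 (by simp [htail])
        have : t1 ≤ tail.sum := List.single_le_sum (fun x hx => Nat.zero_le x) _ (by simp [htail])
        omega
      have hdl : tail.dropLast.sum + tail.getLast htne = tail.sum := by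
        conv_rhs => rw [← List.dropLast_append_getLast htne]
        rw [List.sum_append, List.sum_cons, List.sum_nil]; ring
      simp only [List.getLast_cons_cons, List.dropLast_cons₂]
      rw [SigmaPi_cons, SigmaPi_cons, SigmaPi_cons]
      set g := tail.getLast htne with hgdef
      have e1 : (j-1) + 1 - (l + tail.sum) = j - (l + tail.sum) := by omega
      have e2 : (j - g) + 1 - (l + tail.dropLast.sum) = j + 1 - (l + tail.sum) := by omega
      have e3 : j + 1 - (l + tail.sum) = (j - (l + tail.sum)) + 1 := by omega
      rw [e1, e2]
      have hterm : ∀ i ∈ Finset.Icc a (j + 1 - (l + tail.sum)),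
          PiPoly a (i-1) * (-X^i) * SigmaPi (i+l) j tail
          = (1 - X^j) * (PiPoly a (i-1) * (-X^i) * SigmaPi (i+l) (j-1) tail)
            + (-X ^ (j + 1 - g)) * (PiPoly a (i-1) * (-X^i) * SigmaPi (i+l) (j-g) tail.dropLast) := by
        intro i hi; simp only [Finset.mem_Icc] at hi
        rw [ih htne (i+l) j (fun x hx => hpos x (List.mem_cons_of_mem _ hx)) (by omega) (by omega)]
        ring
      rw [Finset.sum_congr rfl hterm, Finset.sum_add_distrib, ← Finset.mul_sum, ← Finset.mul_sum]
      congr 2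
      rw [e3, Finset.sum_Icc_succ_top (by omega)]
      have : SigmaPi ((j - (l + tail.sum)) + 1 + l) (j-1) tail = 0 := by
        apply Z (by omega) htne
        simp only [htail, List.sum_cons] at *
        omega
      rw [this]
      ring
/-- Finset of lists of positive naturals with sum `m`. -/
def CLf : ℕ → Finset (List ℕ)
  | 0 => {[]}
  | (m+1) => (Finset.range (m+1)).biUnion fun d => (CLf (m - d)).image (List.cons (d+1))

lemma CLf_mem (m : ℕ) : ∀ x : List ℕ, x ∈ CLf m ↔ (∀ i ∈ x, 1 ≤ i) ∧ x.sum = m := by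
  induction m using Nat.strong_induction_on with
  | _ m ih =>
    intro x
    match m with
    | 0 =>
      simp only [CLf, Finset.mem_singleton]
      constructor
      · rintro rfl; simp
      · rintro ⟨hpos, hsum⟩
        cases x with
        | nil => rfl
        | cons h t =>
          have := hpos h (by simp)
          simp only [List.sum_cons] at hsum; omega
    | m + 1 =>
      simp only [CLf, Finset.mem_biUnion, Finset.mem_image, Finset.mem_range]
      constructor
      · rintro ⟨d, hd, y, hy, rfl⟩
        rw [ih (m - d) (by omega)] at hy
        refine ⟨?_, ?_⟩
        · intro i hi
          rcases List.mem_cons.mp hi with rfl | hi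
          · omega
          · exact hy.1 i hi
        · simp only [List.sum_cons, hy.2]; omega
      · rintro ⟨hpos, hsum⟩
        cases x with
        | nil => simp at hsum
        | cons h t =>
          have hh : 1 ≤ h := hpos h (by simp)
          simp only [List.sum_cons] at hsum
          refine ⟨h - 1, by omega, t, ?_, by congr 1; omega⟩
          rw [ih (m - (h-1)) (by omega)]
          exact ⟨fun i hi => hpos i (by simp [hi]), by omega⟩

/-- The sum `S a j m = ∑_{compositions of m} ΣΠ(a,j)[blocks+1]`. -/
noncomputable def Sf (a j m : ℕ) : Polynomial ℤ :=
  ∑ x ∈ CLf m, SigmaPi a j (x.map (· + 1))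

lemma Sf_zero_m (a j : ℕ) : Sf a j 0 = PiPoly a j := by
  simp [Sf, CLf, SigmaPi_nil]

lemma Sf_zero {a j m : ℕ} (ha : 1 ≤ a) (hm : 1 ≤ m) (hj : j < a + m) : Sf a j m = 0 := by
  rw [Sf]
  apply Finset.sum_eq_zero
  intro x hx
  rw [CLf_mem] at hx
  obtain ⟨hpos, hsum⟩ := hx
  cases x with
  | nil => simp at hsum; omega
  | cons h t =>
    apply Z ha (by simp)
    simp only [List.map_cons, List.sum_cons]
    have : (t.map (· + 1)).sum = t.sum + t.length := by
      induction t with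
      | nil => simp
      | cons u v ihh => simp [ihh]; ring
    simp only [List.sum_cons] at hsum
    omega

/-- Last-block decomposition of the sum over `CLf m`. -/
lemma Sf_last (m : ℕ) (hm : 1 ≤ m) (F : List ℕ → Polynomial ℤ) :
    ∑ x ∈ CLf m, F x
      = ∑ d ∈ Finset.range m, ∑ y ∈ CLf (m - 1 - d), F (y ++ [d + 1]) := by
  rw [← Finset.sum_sigma ((Finset.range m)) (fun d => CLf (m - 1 - d))
      (fun p => F (p.2 ++ [p.1 + 1]))]
  refine (Finset.sum_bij (i := fun p _ => p.2 ++ [p.1 + 1]) ?_ ?_ ?_ ?_).symm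
  · rintro ⟨d, y⟩ hp
    simp only [Finset.mem_sigma, Finset.mem_range] at hp
    obtain ⟨hd, hy⟩ := hp
    rw [CLf_mem] at hy ⊢
    constructor
    · intro i hi
      rcases List.mem_append.mp hi with hi | hi
      · exact hy.1 i hi
      · simp at hi; omega
    · rw [List.sum_append]
      simp only [List.sum_cons, List.sum_nil, hy.2]; omega
  · rintro ⟨d1, y1⟩ h1 ⟨d2, y2⟩ h2 heq
    have h3 := (List.append_inj' heq rfl)
    obtain ⟨hy, hd⟩ := h3
    simp only [List.cons.injEq] at hd
    obtain rfl : d1 = d2 := by omega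
    obtain rfl : y1 = y2 := hy
    rfl
  · intro x hx
    rw [CLf_mem] at hx
    obtain ⟨hpos, hsum⟩ := hx
    have hxne : x ≠ [] := by
      rintro rfl; simp at hsum; omega
    have hg1 : 1 ≤ x.getLast hxne := hpos _ (List.getLast_mem hxne)
    have hgs : x.getLast hxne ≤ x.sum :=
      List.single_le_sum (fun i _ => Nat.zero_le i) _ (List.getLast_mem hxne)
    have hds : x.dropLast.sum + x.getLast hxne = x.sum := by
      conv_rhs => rw [← List.dropLast_append_getLast hxne]
      rw [List.sum_append]; simp
    refine ⟨⟨x.getLast hxne - 1, x.dropLast⟩, ?_, ?_⟩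
    · simp only [Finset.mem_sigma, Finset.mem_range]
      constructor
      · omega
      · rw [CLf_mem]
        refine ⟨fun i hi => hpos i (List.dropLast_subset _ hi), by omega⟩
    · show x.dropLast ++ [x.getLast hxne - 1 + 1] = x
      have : x.getLast hxne - 1 + 1 = x.getLast hxne := by omega
      rw [this, List.dropLast_append_getLast]
  · intros; rfl
lemma sum_map_succ (y : List ℕ) : (y.map (· + 1)).sum = y.sum + y.length := by
  induction y with
  | nil => simp
  | cons h t ih => simp [ih]; omega

lemma getLast_eq_of_concat {α : Type*} {l w : List α} {x : α} (h : l ≠ [])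
    (he : l = w ++ [x]) : l.getLast h = x := by
  subst he; exact List.getLast_concat

lemma R {a j m : ℕ} (ha : 1 ≤ a) (hm : 1 ≤ m) (hj : a + m ≤ j) :
    Sf a j m = (1 - X^j) * Sf a (j-1) m
      + ∑ d ∈ Finset.range m, (-X^(j-d-1)) * Sf a (j-d-2) (m-1-d) := by
  have key : ∀ d ∈ Finset.range m, ∀ y ∈ CLf (m-1-d),
      SigmaPi a j ((y ++ [d+1]).map (· + 1))
      = (1-X^j) * SigmaPi a (j-1) ((y ++ [d+1]).map (· + 1))
        + (-X^(j-d-1)) * SigmaPi a (j-d-2) (y.map (· + 1)) := by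
    intro d hd y hy
    simp only [Finset.mem_range] at hd
    rw [CLf_mem] at hy
    obtain ⟨hpos, hsum⟩ := hy
    have hws : ((y ++ [d+1]).map (· + 1)).sum = m + 1 + y.length := by
      rw [sum_map_succ, List.sum_append]
      simp only [List.sum_cons, List.sum_nil, List.length_append, List.length_cons,
        List.length_nil, hsum]
      omega
    have hwsum : (y.map (· + 1)).sum = (m - 1 - d) + y.length := by
      rw [sum_map_succ, hsum]
    have hmapapp : (y ++ [d+1]).map (· + 1) = y.map (· + 1) ++ [d+2] := by
      rw [List.map_append]; rfl
    by_cases hcase : a + (m + 1 + y.length) ≤ j + 1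
    · have hne : (y ++ [d+1]).map (· + 1) ≠ [] := by simp
      rw [L _ hne a j ?_ ha (by rw [hws]; omega)]
      · have hgl : ((y ++ [d+1]).map (· + 1)).getLast hne = d + 2 :=
          getLast_eq_of_concat hne hmapapp
        have hdl : ((y ++ [d+1]).map (· + 1)).dropLast = y.map (· + 1) := by
          rw [hmapapp, List.dropLast_concat]
        rw [hgl, hdl, show j + 1 - (d+2) = j - d - 1 by omega,
          show j - (d+2) = j - d - 2 by omega]
      · intro x hx
        simp only [List.mem_map] at hx
        obtain ⟨u, _, rfl⟩ := hx
        omega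
    · have hylen : 1 ≤ y.length := by omega
      have hyne : y ≠ [] := by
        cases y with
        | nil => simp at hylen
        | cons u v => simp
      have z1 : SigmaPi a j ((y ++ [d+1]).map (· + 1)) = 0 := by
        apply Z ha (by simp) (by rw [hws]; omega)
      have z2 : SigmaPi a (j-1) ((y ++ [d+1]).map (· + 1)) = 0 := by
        apply Z ha (by simp) (by rw [hws]; omega)
      have z3 : SigmaPi a (j-d-2) (y.map (· + 1)) = 0 := by
        apply Z ha (by simp [hyne]) (by rw [hwsum]; omega)
      rw [z1, z2, z3]; ring
  rw [Sf, Sf_last m hm, Finset.sum_congr rfl (fun d hd => Finset.sum_congr rfl (key d hd))]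
  have hA : Sf a (j-1) m = ∑ d ∈ Finset.range m, ∑ y ∈ CLf (m-1-d),
      SigmaPi a (j-1) ((y ++ [d+1]).map (· + 1)) := by
    rw [Sf]; exact Sf_last m hm _
  simp only [Finset.sum_add_distrib, ← Finset.mul_sum]
  rw [hA]
  rfl

lemma Ilem {a j m : ℕ} (ha : 1 ≤ a) (hm : 1 ≤ m) (hj : a + m ≤ j + 1) :
    Sf a j m = Sf a (j-1) (m-1) + (1 - X^j) * Sf a (j-1) m - Sf a (j-2) (m-1) := by
  rcases eq_or_lt_of_le hj with heq | hlt
  · -- boundary j + 1 = a + m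
    rcases Nat.lt_or_ge m 2 with hm1 | hm2
    · have hm1 : m = 1 := by omega
      subst hm1
      have hja : j = a := by omega
      subst hja
      rw [Sf_zero ha le_rfl (by omega), Sf_zero_m, Sf_zero_m,
        Sf_zero ha le_rfl (by omega), PiPoly_empty (by omega), PiPoly_empty (by omega)]
      ring
    · rw [Sf_zero ha hm (by omega), Sf_zero ha (by omega) (by omega),
        Sf_zero ha hm (by omega), Sf_zero ha (by omega) (by omega)]
      ring
  · have hj' : a + m ≤ j := by omega
    rw [R ha hm hj']
    suffices h : ∑ d ∈ Finset.range m, (-X^(j-d-1)) * Sf a (j-d-2) (m-1-d)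
        = Sf a (j-1) (m-1) - Sf a (j-2) (m-1) by rw [h]; ring
    rcases Nat.lt_or_ge m 2 with hm1 | hm2
    · have hm1 : m = 1 := by omega
      subst hm1
      rw [Finset.sum_range_one]
      simp only [Nat.sub_zero, Nat.sub_self]
      rw [Sf_zero_m, Sf_zero_m,
        PiPoly_succ (a := a) (j := j - 1) ha (by omega),
        show j - 1 - 1 = j - 2 by omega]
      ring
    · have hR2 := R ha (show 1 ≤ m - 1 by omega) (show a + (m-1) ≤ j - 1 by omega)
      rw [show j - 1 - 1 = j - 2 by omega] at hR2
      rw [hR2]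
      conv_lhs => rw [show m = m - 1 + 1 by omega]
      rw [Finset.sum_range_succ']
      have hcong : ∀ d ∈ Finset.range (m - 1),
          (-X^(j-(d+1)-1)) * Sf a (j-(d+1)-2) (m-1+1-1-(d+1))
          = (-X^(j-1-d-1)) * Sf a (j-1-d-2) (m-1-1-d) := by
        intro d hd
        rw [show j-(d+1)-1 = j-1-d-1 by omega, show j-(d+1)-2 = j-1-d-2 by omega,
          show m-1+1-1-(d+1) = m-1-1-d by omega]
      rw [Finset.sum_congr rfl hcong, show j - 0 - 1 = j - 1 by omega,
        show j - 0 - 2 = j - 2 by omega, show m - 1 + 1 - 1 - 0 = m - 1 by omega]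
      ring
lemma comp_blocks_ne_nil {m : ℕ} (hm : 1 ≤ m) (c : Composition m) : c.blocks ≠ [] := by
  intro h
  have := c.blocks_sum
  rw [h] at this
  simp at this
  omega

lemma bjkt_eq (j k t : ℕ) (ht : t ≤ k) : bjkt j k t = Sf (t+2) j (k-t) := by
  rcases eq_or_lt_of_le ht with rfl | htlt
  · rw [bjkt, if_pos rfl, Nat.sub_self, Sf_zero_m]
  · have hm : 1 ≤ k - t := by omega
    rw [bjkt, if_neg (by omega)]
    have step1 : ∑ u ∈ Finset.Icc 1 (min (j-k-1) (k-t)),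
        ∑ c ∈ Finset.univ.filter (fun c : Composition (k-t) => c.length = u),
          SigmaPi (t+2) j (c.blocks.map (· + 1))
        = ∑ u ∈ Finset.Icc 1 (k-t),
        ∑ c ∈ Finset.univ.filter (fun c : Composition (k-t) => c.length = u),
          SigmaPi (t+2) j (c.blocks.map (· + 1)) := by
      apply Finset.sum_subset
      · exact Finset.Icc_subset_Icc le_rfl (min_le_right _ _)
      · intro u hu hnu
        simp only [Finset.mem_Icc] at hu hnu
        have hular : j - k - 1 < u := by omega
        apply Finset.sum_eq_zero
        intro c hc
        simp only [Finset.mem_filter] at hc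
        apply Z (by omega) ?_ ?_
        · cases h : c.blocks with
          | nil => exact absurd h (comp_blocks_ne_nil hm c)
          | cons x xs => simp
        · rw [sum_map_succ, c.blocks_sum, c.blocks_length, hc.2]
          omega
    rw [step1]
    rw [Finset.sum_fiberwise_of_maps_to (g := Composition.length)
      (t := Finset.Icc 1 (k-t)) ?_ (fun c => SigmaPi (t+2) j (c.blocks.map (· + 1)))]
    · rw [Sf]
      apply Finset.sum_bij (i := fun (c : Composition (k-t)) _ => c.blocks)
      · intro c _
        rw [CLf_mem]
        exact ⟨fun i hi => c.blocks_pos hi, c.blocks_sum⟩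
      · intro c1 _ c2 _ h
        exact Composition.ext h
      · intro x hx
        rw [CLf_mem] at hx
        exact ⟨⟨x, fun {i} hi => hx.1 i hi, hx.2⟩, Finset.mem_univ _, rfl⟩
      · intros; rfl
    · intro c _
      simp only [Finset.mem_Icc]
      constructor
      · rw [← c.blocks_length]
        cases h : c.blocks with
        | nil => exact absurd h (comp_blocks_ne_nil hm c)
        | cons x xs => simp
      · exact c.length_le

lemma psi_one : psi 1 = X^2 := by
  rw [psi]
  norm_num

lemma psi_succ (k : ℕ) (hk : 1 ≤ k) : psi k = psi (k-1) + X^(k+1) := by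
  rw [psi, psi, show k + 1 = (k - 1 + 1) + 1 by omega,
    Finset.sum_Icc_succ_top (by omega), show k - 1 + 1 = k by omega]

lemma PiPoly_bot {a j : ℕ} (h : a ≤ j) : PiPoly a j = (1 - X^a) * PiPoly (a+1) j := by
  rw [PiPoly, PiPoly, ← Finset.Ico_add_one_right_eq_Icc, ← Finset.Ico_add_one_right_eq_Icc,
    Finset.prod_eq_prod_Ico_succ_bot (by omega)]

lemma sum_split_top {M : Type*} [AddCommMonoid M] (f : ℕ → M) (k : ℕ) (hk : 1 ≤ k) :
    ∑ t ∈ Finset.Icc 1 k, f t = ∑ t ∈ Finset.Icc 1 (k-1), f t + f k := by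
  conv_lhs => rw [show k = k-1+1 by omega]
  rw [Finset.sum_Icc_succ_top (by omega), show k-1+1 = k by omega]
lemma main' (b : ℕ → ℕ → Polynomial ℤ) (hb : bfam b) :
    ∀ j k, 1 ≤ k → k ≤ j - 1 →
    b j k = ∑ t ∈ Finset.Icc 1 k, (1 - psi t) * Sf (t+2) j (k-t) := by
  obtain ⟨hb1, hb2, hb3⟩ := hb
  intro j
  induction j using Nat.strong_induction_on with
  | _ j ih =>
    intro k h1 h2
    have hj2 : k + 1 ≤ j := by omega
    rcases eq_or_lt_of_le h1 with rfl | hk2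
    · -- k = 1
      rw [hb2 j (by omega), Finset.Icc_self, Finset.sum_singleton, psi_one,
        Nat.sub_self, Sf_zero_m]
      have : (∏ t ∈ Finset.Icc 2 j, (1 - X^t) : Polynomial ℤ) = PiPoly 2 j := rfl
      rw [this, PiPoly_bot (show 2 ≤ j by omega)]
    · -- 2 ≤ k
      have hk2 : 2 ≤ k := hk2
      have hrec := hb3 j k hk2 h2
      have hA := ih (j-1) (by omega) (k-1) (by omega) (by omega)
      by_cases hkj : k ≤ j - 2
      · -- generic case
        have hB := ih (j-1) (by omega) k h1 (by omega)
        have hC := ih (j-2) (by omega) (k-1) (by omega) (by omega)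
        rw [hrec, hA, hB, hC]
        rw [sum_split_top (fun t => (1 - psi t) * Sf (t+2) j (k-t)) k h1,
          sum_split_top (fun t => (1 - psi t) * Sf (t+2) (j-1) (k-t)) k h1]
        rw [Nat.sub_self, Sf_zero_m, Sf_zero_m, PiPoly_succ (a := k+2) (j := j) (by omega) (by omega)]
        have hper : ∀ t ∈ Finset.Icc 1 (k-1),
            (1 - psi t) * Sf (t+2) j (k-t)
            = (1 - psi t) * Sf (t+2) (j-1) (k-1-t)
              + (1 - X^j) * ((1 - psi t) * Sf (t+2) (j-1) (k-t))
              - (1 - psi t) * Sf (t+2) (j-2) (k-1-t) := by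
          intro t htm
          simp only [Finset.mem_Icc] at htm
          rw [Ilem (show 1 ≤ t+2 by omega) (show 1 ≤ k-t by omega) (show t+2+(k-t) ≤ j+1 by omega),
            show k - t - 1 = k - 1 - t by omega]
          ring
        rw [Finset.sum_congr rfl hper]
        simp only [Finset.sum_sub_distrib, Finset.sum_add_distrib, ← Finset.mul_sum]
        ring
      · -- k = j - 1
        have hjk1 : j = k + 1 := by omega
        have e1 : b (j-1) k = 1 := by
          rw [show j - 1 = k by omega]; exact hb1 k (by omega)
        have e2 : b (j-2) (k-1) = 1 := by
          rw [show j - 2 = k - 1 by omega]; exact hb1 (k-1) (by omega)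
        rw [hrec, hA, e1, e2]
        rw [sum_split_top _ k h1, Nat.sub_self, Sf_zero_m, PiPoly_empty (by omega)]
        have hper : ∀ t ∈ Finset.Icc 1 (k-1),
            (1 - psi t) * Sf (t+2) j (k-t)
            = (1 - psi t) * Sf (t+2) (j-1) (k-1-t)
              - (1 - psi t) * Sf (t+2) (j-2) (k-1-t) := by
          intro t htm
          simp only [Finset.mem_Icc] at htm
          rw [Ilem (show 1 ≤ t+2 by omega) (show 1 ≤ k-t by omega) (show t+2+(k-t) ≤ j+1 by omega),
            show k - t - 1 = k - 1 - t by omega,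
            Sf_zero (show 1 ≤ t+2 by omega) (show 1 ≤ k-t by omega) (by omega)]
          ring
        rw [Finset.sum_congr rfl hper]
        have hPC : ∑ t ∈ Finset.Icc 1 (k-1), (1 - psi t) * Sf (t+2) (j-2) (k-1-t)
            = 1 - psi (k-1) := by
          have hz : ∑ t ∈ Finset.Icc 1 (k-1-1), (1 - psi t) * Sf (t+2) (j-2) (k-1-t) = 0 := by
            apply Finset.sum_eq_zero
            intro t htm
            simp only [Finset.mem_Icc] at htm
            rw [Sf_zero (show 1 ≤ t+2 by omega) (show 1 ≤ k-1-t by omega) (by omega)]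
            ring
          rw [sum_split_top _ (k-1) (by omega), hz, Nat.sub_self, Sf_zero_m,
            PiPoly_empty (by omega)]
          ring
        rw [Finset.sum_sub_distrib, hPC, psi_succ k (by omega),
          show j = k + 1 by omega]
        ring

end Stmt13

theorem stmt13 (b : ℕ → ℕ → Polynomial ℤ) (hb : bfam b)
    (j k : ℕ) (h1 : 1 ≤ k) (h2 : k ≤ j - 1) :
    b j k = ∑ t ∈ Finset.Icc 1 k, (1 - psi t) * bjkt j k t := by
  rw [Stmt13.main' b hb j k h1 h2]
  apply Finset.sum_congr rfl
  intro t htm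
  simp only [Finset.mem_Icc] at htm
  rw [Stmt13.bjkt_eq j k t htm.2]
end

section
/- If l_1 + ··· + l_u = b − a + 1 (so the gaps exactly fill the interval), then ΣΠ(a,b)[l_1,...,l_u] = (−1)^u · q^{u·a + (u−1)·l_1 + (u−2)·l_2 + ··· + l_{u-1}}. -/
open Polynomial Finset

theorem stmt14 (a b : ℕ) (l : List ℕ) (ha : 1 ≤ a) (hab : a ≤ b)
    (hl : ∀ x ∈ l, 2 ≤ x) (hsum : l.sum = b - a + 1) :
    SigmaPi a b l = (-1)^l.length *
      X ^ (l.length * a +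
        ∑ t ∈ Finset.range l.length, (l.length - 1 - t) * l.getD t 0) := by
  induction l generalizing a with
  | nil => simp at hsum
  | cons x ls ih =>
    have hx : 2 ≤ x := hl x (by simp)
    have hsum' : x + ls.sum = b - a + 1 := by simpa using hsum
    rw [SigmaPi, show b + 1 - (x + ls.sum) = a from by omega, Finset.Icc_self,
      Finset.sum_singleton, show PiPoly a (a-1) = 1 from by
        rw [PiPoly, Finset.Icc_eq_empty (by omega), Finset.prod_empty], one_mul]
    rcases eq_or_ne ls [] with rfl | hne
    · have hx' : x = b - a + 1 := by simpa using hsum'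
      have : a + x = b + 1 := by omega
      rw [SigmaPi, this, show PiPoly (b+1) b = 1 from by
        rw [PiPoly, Finset.Icc_eq_empty (by omega), Finset.prod_empty]]
      simp
    · have hls2 : 2 ≤ ls.sum := by
        rcases ls with _ | ⟨y, ys⟩
        · exact absurd rfl hne
        · have := hl y (by simp); simp [List.sum_cons]; omega
      have hab' : a + x ≤ b := by omega
      rw [ih (a + x) (by omega) hab' (fun y hy => hl y (by simp [hy])) (by omega)]
      simp only [List.length_cons]
      have hexp : (ls.length + 1) * a + ∑ t ∈ Finset.range (ls.length + 1), (ls.length + 1 - 1 - t) * (x :: ls).getD t 0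
          = a + (ls.length * (a + x) + ∑ t ∈ Finset.range ls.length, (ls.length - 1 - t) * ls.getD t 0) := by
        rw [Finset.sum_range_succ']
        have : ∀ t ∈ Finset.range ls.length, (ls.length + 1 - 1 - (t+1)) * (x :: ls).getD (t+1) 0
            = (ls.length - 1 - t) * ls.getD t 0 := by
          intro t ht
          simp only [List.getD_cons_succ]
          congr 1
          omega
        rw [Finset.sum_congr rfl this]
        simp only [List.getD_cons_zero]
        rw [show ls.length + 1 - 1 - 0 = ls.length from by omega]
        ring
      rw [hexp, pow_add, pow_succ]
      ring
end
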